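/- Let t₀ ∈ (0,∞) and let a ∈ L^∞(ℝ). If a is continuous at the point −1/(2√t₀), then the matrix-valued function φ^a(t₁,t₂) = ∫_ℝ a((−t₁+s)/(2√(t₂(t₁²+1)))) H(s)[H(s)]^T ds on Π = ℝ × (0,∞) satisfies lim_{(t₁,t₂)→(+∞,t₀)} φ^a(t₁,t₂) = a(−1/(2√t₀))·I, i.e., for every ε > 0 there exist δ > 0 and Nₒ > 0 such that ‖φ^a(t₁,t₂) − a(−1/(2√t₀))·I‖ < ε whenever |t₂ − t₀| < δ and t₁ > Nₒ. Analogously, if a is continuous at 1/(2√t₀), then lim_{(t₁,t₂)→(−∞,t₀)} φ^a(t₁,t₂) = a(1/(2√t₀))·I. -/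

import Mathlib

open MeasureTheory Filter Topology
open scoped Matrix.Norms.L2Operator

noncomputable section

/-- The physicists' Hermite polynomial `H_m(y) = (−1)^m e^{y²} (d/dy)^m e^{−y²}`. -/
def hermiteH (m : ℕ) (y : ℝ) : ℝ :=
  (-1 : ℝ) ^ m * Real.exp (y ^ 2) * iteratedDeriv m (fun x => Real.exp (-x ^ 2)) y

/-- The Hermite function `h_m(y) = (2^m m! √π)^{−1/2} H_m(y) e^{−y²/2}`. -/
def hermiteFun (m : ℕ) (y : ℝ) : ℝ :=
  (Real.sqrt (2 ^ m * m.factorial * Real.sqrt Real.pi))⁻¹ * hermiteH m y *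
    Real.exp (-y ^ 2 / 2)

/-- The matrix `H(y)[H(y)]ᵀ`, where `H(y) = (h_0(y), …, h_{n−1}(y))ᵀ`. -/
def HHT (n : ℕ) (y : ℝ) : Matrix (Fin n) (Fin n) ℝ :=
  Matrix.of fun j k : Fin n => hermiteFun j y * hermiteFun k y

/-- `φ^a(t₁,t₂) = ∫_ℝ a((−t₁+s)/(2√(t₂(t₁²+1)))) H(s)[H(s)]ᵀ ds` as a complex matrix. -/
def phiA (n : ℕ) (a : ℝ → ℂ) (t₁ t₂ : ℝ) : Matrix (Fin n) (Fin n) ℂ :=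
  Matrix.of fun j k : Fin n =>
    ∫ s : ℝ, a ((-t₁ + s) / (2 * Real.sqrt (t₂ * (t₁ ^ 2 + 1)))) * (HHT n s j k : ℂ)

namespace PhiAAux
open Polynomial

open Polynomial

/-- physicists' Hermite polynomials, defined recursively -/
def P : ℕ → ℝ[X]
  | 0 => 1
  | m + 1 => C 2 * (X * P m) - derivative (P m)

lemma gauss_hasDerivAt (y : ℝ) :
    HasDerivAt (fun x : ℝ => Real.exp (-x ^ 2)) (-2 * y * Real.exp (-y ^ 2)) y := by
  have h : HasDerivAt (fun x : ℝ => -x ^ 2) (-(2 * y)) y := by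
    simpa using (hasDerivAt_pow 2 y).fun_neg
  have := h.exp
  convert this using 1
  ring

lemma closedForm_hasDerivAt (m : ℕ) (y : ℝ) :
    HasDerivAt (fun y : ℝ => (-1 : ℝ) ^ m * (P m).eval y * Real.exp (-y ^ 2))
      ((-1 : ℝ) ^ (m + 1) * (P (m + 1)).eval y * Real.exp (-y ^ 2)) y := by
  have h1 := (P m).hasDerivAt y
  have h2 := gauss_hasDerivAt y
  have h := (h1.const_mul ((-1 : ℝ) ^ m)).fun_mul h2
  refine h.congr_deriv ?_
  simp only [P, eval_sub, eval_mul, eval_C, eval_X]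
  ring

lemma iteratedDeriv_gauss (m : ℕ) :
    iteratedDeriv m (fun x : ℝ => Real.exp (-x ^ 2)) =
      fun y => (-1 : ℝ) ^ m * (P m).eval y * Real.exp (-y ^ 2) := by
  induction m with
  | zero => funext y; simp [P]
  | succ m ih =>
    funext y
    rw [iteratedDeriv_succ, ih]
    exact (closedForm_hasDerivAt m y).deriv

lemma hermiteH_eval (m : ℕ) (y : ℝ) : hermiteH m y = (P m).eval y := by
  rw [hermiteH, iteratedDeriv_gauss]
  have h1 : Real.exp (y ^ 2) * Real.exp (-y ^ 2) = 1 := by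
    rw [← Real.exp_add]; simp
  have h2 : ((-1 : ℝ) ^ m) * ((-1 : ℝ) ^ m) = 1 := by
    rw [← pow_add]; exact Even.neg_one_pow ⟨m, rfl⟩
  calc (-1 : ℝ) ^ m * Real.exp (y ^ 2) * ((-1 : ℝ) ^ m * (P m).eval y * Real.exp (-y ^ 2))
      = ((-1 : ℝ) ^ m * (-1 : ℝ) ^ m) * (Real.exp (y ^ 2) * Real.exp (-y ^ 2)) * (P m).eval y := by
        ring
    _ = (P m).eval y := by rw [h1, h2]; ring

lemma P_natDegree_le (m : ℕ) : (P m).natDegree ≤ m := by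
  induction m with
  | zero => simp [P]
  | succ m ih =>
    have h1 : (C (2:ℝ) * (X * P m)).natDegree ≤ m + 1 := by
      refine natDegree_mul_le.trans ?_
      have : (X * P m).natDegree ≤ 1 + m := natDegree_mul_le.trans (by simp [ih])
      simp only [natDegree_C]
      omega
    have h2 : (derivative (P m)).natDegree ≤ m + 1 :=
      (natDegree_derivative_le _).trans (by omega)
    exact (natDegree_sub_le _ _).trans (max_le h1 h2)

lemma P_coeff_self (m : ℕ) : (P m).coeff m = 2 ^ m := by
  induction m with
  | zero => simp [P]
  | succ m ih =>
    have hz : (P m).coeff (m + 2) = 0 :=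
      coeff_eq_zero_of_natDegree_lt (lt_of_le_of_lt (P_natDegree_le m) (by omega))
    simp only [P, coeff_sub, coeff_C_mul, coeff_X_mul, coeff_derivative, ih, hz]
    ring

lemma iterate_derivative_P_self (m : ℕ) :
    derivative^[m] (P m) = C ((m.factorial : ℝ) * 2 ^ m) := by
  have hdeg : (derivative^[m] (P m)).natDegree = 0 := by
    have := (natDegree_iterate_derivative (P m) m).trans
      (Nat.sub_le_sub_right (P_natDegree_le m) m)
    omega
  have h0 : (derivative^[m] (P m)).coeff 0 = (m.factorial : ℝ) * 2 ^ m := by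
    rw [coeff_iterate_derivative]
    simp [Nat.descFactorial_self, P_coeff_self, nsmul_eq_mul]
  rw [eq_C_of_natDegree_eq_zero hdeg, h0]

lemma iterate_derivative_P_zero {j k : ℕ} (h : j < k) : derivative^[k] (P j) = 0 :=
  iterate_derivative_eq_zero (lt_of_le_of_lt (P_natDegree_le j) h)


open Polynomial

lemma integrable_pow_gauss (k : ℕ) :
    Integrable fun y : ℝ => y ^ k * Real.exp (-y ^ 2) := by
  have h := integrable_rpow_mul_exp_neg_mul_sq (b := 1) one_pos
    (s := (k : ℝ)) (lt_of_lt_of_le neg_one_lt_zero (Nat.cast_nonneg k))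
  simpa [Real.rpow_natCast] using h

lemma integrable_poly_gauss (Q : ℝ[X]) :
    Integrable fun y : ℝ => Q.eval y * Real.exp (-y ^ 2) := by
  induction Q using Polynomial.induction_on' with
  | add p q hp hq => simpa [add_mul] using hp.fun_add hq
  | monomial k c =>
      have := (integrable_pow_gauss k).const_mul c
      simpa [eval_monomial, mul_assoc] using this

lemma integrable_poly_iteratedDeriv_gauss (Q : ℝ[X]) (j : ℕ) :
    Integrable fun y : ℝ => Q.eval y * iteratedDeriv j (fun x : ℝ => Real.exp (-x ^ 2)) y := by
  rw [iteratedDeriv_gauss]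
  have h : (fun y : ℝ => Q.eval y * ((-1 : ℝ) ^ j * (P j).eval y * Real.exp (-y ^ 2)))
      = fun y => ((-1 : ℝ) ^ j) * ((Q * P j).eval y * Real.exp (-y ^ 2)) := by
    funext y; simp only [eval_mul]; ring
  rw [h]
  exact (integrable_poly_gauss _).const_mul _

lemma integral_poly_iteratedDeriv_gauss (k : ℕ) (Q : ℝ[X]) :
    ∫ y : ℝ, Q.eval y * iteratedDeriv k (fun x : ℝ => Real.exp (-x ^ 2)) y
      = (-1 : ℝ) ^ k * ∫ y : ℝ, (derivative^[k] Q).eval y * Real.exp (-y ^ 2) := by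
  induction k generalizing Q with
  | zero => simp
  | succ k ih =>
    have step : ∫ y : ℝ, Q.eval y * iteratedDeriv (k + 1) (fun x : ℝ => Real.exp (-x ^ 2)) y
        = - ∫ y : ℝ, (derivative Q).eval y *
            iteratedDeriv k (fun x : ℝ => Real.exp (-x ^ 2)) y := by
      apply integral_mul_deriv_eq_deriv_mul_of_integrable
        (u := fun y => Q.eval y) (u' := fun y => (derivative Q).eval y)
        (v := iteratedDeriv k (fun x : ℝ => Real.exp (-x ^ 2)))
        (v' := iteratedDeriv (k + 1) (fun x : ℝ => Real.exp (-x ^ 2)))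
      · exact fun x _ => Q.hasDerivAt x
      · intro x _
        rw [iteratedDeriv_gauss k, iteratedDeriv_gauss (k + 1)]
        exact closedForm_hasDerivAt k x
      · exact integrable_poly_iteratedDeriv_gauss Q (k + 1)
      · exact integrable_poly_iteratedDeriv_gauss (derivative Q) k
      · exact integrable_poly_iteratedDeriv_gauss Q k
    rw [step, ih (derivative Q), ← Function.iterate_succ_apply]
    ring


open Polynomial

/-- the normalizing constant -/
def cst (m : ℕ) : ℝ := (Real.sqrt (2 ^ m * m.factorial * Real.sqrt Real.pi))⁻¹

lemma hermiteFun_mul (j k : ℕ) (y : ℝ) :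
    hermiteFun j y * hermiteFun k y
      = cst j * cst k * ((P j * P k).eval y * Real.exp (-y ^ 2)) := by
  have hexp : Real.exp (-y ^ 2 / 2) * Real.exp (-y ^ 2 / 2) = Real.exp (-y ^ 2) := by
    rw [← Real.exp_add]; ring_nf
  simp only [hermiteFun, hermiteH_eval, cst, eval_mul]
  calc (Real.sqrt (2 ^ j * j.factorial * Real.sqrt Real.pi))⁻¹ * (P j).eval y *
        Real.exp (-y ^ 2 / 2) *
        ((Real.sqrt (2 ^ k * k.factorial * Real.sqrt Real.pi))⁻¹ * (P k).eval y *
          Real.exp (-y ^ 2 / 2))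
      = (Real.sqrt (2 ^ j * j.factorial * Real.sqrt Real.pi))⁻¹ *
          (Real.sqrt (2 ^ k * k.factorial * Real.sqrt Real.pi))⁻¹ *
          ((P j).eval y * (P k).eval y *
            (Real.exp (-y ^ 2 / 2) * Real.exp (-y ^ 2 / 2))) := by ring
    _ = _ := by rw [hexp]

lemma integrable_hermiteFun_mul (j k : ℕ) :
    Integrable fun y : ℝ => hermiteFun j y * hermiteFun k y := by
  simp only [hermiteFun_mul]
  exact (integrable_poly_gauss _).const_mul _

lemma hermiteH_mul_gauss (k : ℕ) (y : ℝ) :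
    hermiteH k y * Real.exp (-y ^ 2)
      = (-1 : ℝ) ^ k * iteratedDeriv k (fun x : ℝ => Real.exp (-x ^ 2)) y := by
  have h1 : Real.exp (y ^ 2) * Real.exp (-y ^ 2) = 1 := by
    rw [← Real.exp_add]; simp
  calc hermiteH k y * Real.exp (-y ^ 2)
      = (-1 : ℝ) ^ k * iteratedDeriv k (fun x : ℝ => Real.exp (-x ^ 2)) y *
          (Real.exp (y ^ 2) * Real.exp (-y ^ 2)) := by rw [hermiteH]; ring
    _ = _ := by rw [h1, mul_one]

lemma integral_gauss : ∫ y : ℝ, Real.exp (-y ^ 2) = Real.sqrt Real.pi := by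
  have := integral_gaussian 1
  simpa using this

lemma ortho_aux {j k : ℕ} (hjk : j ≤ k) :
    ∫ y : ℝ, hermiteFun j y * hermiteFun k y = if j = k then (1 : ℝ) else 0 := by
  have key : ∫ y : ℝ, hermiteFun j y * hermiteFun k y
      = cst j * cst k * ∫ y : ℝ, (derivative^[k] (P j)).eval y * Real.exp (-y ^ 2) := by
    have e1 : ∀ y : ℝ, hermiteFun j y * hermiteFun k y
        = cst j * cst k * ((P j).eval y *
            iteratedDeriv k (fun x : ℝ => Real.exp (-x ^ 2)) y) * (-1 : ℝ) ^ k := by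
      intro y
      rw [hermiteFun_mul]
      have h2 : (P j * P k).eval y * Real.exp (-y ^ 2)
          = (P j).eval y * (hermiteH k y * Real.exp (-y ^ 2)) := by
        rw [eval_mul, hermiteH_eval]; ring
      rw [h2, hermiteH_mul_gauss]
      ring
    calc ∫ y : ℝ, hermiteFun j y * hermiteFun k y
        = ∫ y : ℝ, cst j * cst k * ((P j).eval y *
            iteratedDeriv k (fun x : ℝ => Real.exp (-x ^ 2)) y) * (-1 : ℝ) ^ k := by
          simp_rw [e1]
      _ = cst j * cst k * (-1 : ℝ) ^ k * ∫ y : ℝ, (P j).eval y *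
            iteratedDeriv k (fun x : ℝ => Real.exp (-x ^ 2)) y := by
          rw [← integral_const_mul]
          congr 1; funext y; ring
      _ = cst j * cst k * (-1 : ℝ) ^ k * ((-1 : ℝ) ^ k *
            ∫ y : ℝ, (derivative^[k] (P j)).eval y * Real.exp (-y ^ 2)) := by
          rw [integral_poly_iteratedDeriv_gauss]
      _ = cst j * cst k * ((((-1 : ℝ) ^ k) * ((-1 : ℝ) ^ k)) *
            ∫ y : ℝ, (derivative^[k] (P j)).eval y * Real.exp (-y ^ 2)) := by ring
      _ = _ := by
          rw [show ((-1 : ℝ) ^ k) * ((-1 : ℝ) ^ k) = 1 by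
            rw [← pow_add]; exact Even.neg_one_pow ⟨k, rfl⟩, one_mul]
  rcases lt_or_eq_of_le hjk with h | h
  · rw [key, iterate_derivative_P_zero h, if_neg h.ne]
    simp
  · subst h
    rw [key, iterate_derivative_P_self, if_pos rfl]
    have hval : ∫ y : ℝ, (C ((j.factorial : ℝ) * 2 ^ j)).eval y * Real.exp (-y ^ 2)
        = (j.factorial : ℝ) * 2 ^ j * Real.sqrt Real.pi := by
      simp only [eval_C]
      rw [integral_const_mul, integral_gauss]
    rw [hval]
    have hpos : (0 : ℝ) < 2 ^ j * j.factorial * Real.sqrt Real.pi := by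
      have : (0 : ℝ) < Real.sqrt Real.pi := Real.sqrt_pos.mpr Real.pi_pos
      positivity
    have hsq : Real.sqrt (2 ^ j * j.factorial * Real.sqrt Real.pi) *
        Real.sqrt (2 ^ j * j.factorial * Real.sqrt Real.pi)
        = 2 ^ j * j.factorial * Real.sqrt Real.pi := Real.mul_self_sqrt hpos.le
    have hne : Real.sqrt (2 ^ j * j.factorial * Real.sqrt Real.pi) ≠ 0 := by
      intro h0
      rw [h0, mul_zero] at hsq
      exact hpos.ne' hsq.symm
    calc cst j * cst j * ((j.factorial : ℝ) * 2 ^ j * Real.sqrt Real.pi)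
        = (Real.sqrt (2 ^ j * j.factorial * Real.sqrt Real.pi) *
            Real.sqrt (2 ^ j * j.factorial * Real.sqrt Real.pi))⁻¹ *
            (2 ^ j * j.factorial * Real.sqrt Real.pi) := by
          simp only [cst, mul_inv]; ring
      _ = 1 := by rw [hsq]; exact inv_mul_cancel₀ hpos.ne'

lemma integral_hermiteFun_mul (j k : ℕ) :
    ∫ y : ℝ, hermiteFun j y * hermiteFun k y = if j = k then (1 : ℝ) else 0 := by
  rcases le_total j k with h | h
  · exact ortho_aux h
  · have := ortho_aux h
    simp_rw [mul_comm (hermiteFun k _) (hermiteFun j _)] at this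
    rw [this]
    by_cases hjk : j = k
    · simp [hjk]
    · rw [if_neg (fun hkj => hjk hkj.symm), if_neg hjk]


lemma continuous_hermiteFunProd (j k : ℕ) :
    Continuous fun y : ℝ => hermiteFun j y * hermiteFun k y := by
  simp only [hermiteFun_mul]
  exact continuous_const.mul (((P j * P k).continuous).mul
    (Real.continuous_exp.comp (continuous_pow 2).neg))


lemma tendsto_ratio_atTop (s : ℝ) :
    Tendsto (fun t : ℝ => (-t + s) / Real.sqrt (t ^ 2 + 1)) atTop (𝓝 (-1)) := by
  have h1 : Tendsto (fun t : ℝ => -1 + s / t) atTop (𝓝 (-1 : ℝ)) := by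
    have hs : Tendsto (fun t : ℝ => s / t) atTop (𝓝 0) :=
      Tendsto.div_atTop tendsto_const_nhds tendsto_id
    simpa using (tendsto_const_nhds (x := (-1 : ℝ))).add hs
  have h2 : Tendsto (fun t : ℝ => Real.sqrt (1 + 1 / t ^ 2)) atTop (𝓝 1) := by
    have hinv : Tendsto (fun t : ℝ => 1 / t ^ 2) atTop (𝓝 0) :=
      Tendsto.div_atTop tendsto_const_nhds (tendsto_pow_atTop two_ne_zero)
    have : Tendsto (fun t : ℝ => 1 + 1 / t ^ 2) atTop (𝓝 1) := by
      simpa using (tendsto_const_nhds (x := (1 : ℝ))).add hinv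
    have hcont := (Real.continuous_sqrt.tendsto 1).comp this
    simpa [Function.comp_def] using hcont
  have h := h1.div h2 one_ne_zero
  rw [div_one] at h
  apply h.congr'
  filter_upwards [eventually_gt_atTop (0 : ℝ)] with t ht
  have ht' : t ≠ 0 := ht.ne'
  have hsq : Real.sqrt (t ^ 2 + 1) = t * Real.sqrt (1 + 1 / t ^ 2) := by
    rw [← Real.sqrt_sq ht.le, ← Real.sqrt_mul (sq_nonneg t)]
    congr 1
    field_simp
    exact Real.sq_sqrt (sq_nonneg _)
  simp only [Pi.div_apply]
  rw [hsq, ← div_div]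
  field_simp

lemma tendsto_ratio_atBot (s : ℝ) :
    Tendsto (fun t : ℝ => (-t + s) / Real.sqrt (t ^ 2 + 1)) atBot (𝓝 1) := by
  have h := (tendsto_ratio_atTop (-s)).neg
  rw [neg_neg] at h
  have key : Tendsto ((fun t : ℝ => (-t + s) / Real.sqrt (t ^ 2 + 1)) ∘ Neg.neg)
      atTop (𝓝 1) := by
    apply h.congr
    intro t
    show -((-t + -s) / Real.sqrt (t ^ 2 + 1)) = _
    simp only [Function.comp_apply, neg_neg, neg_sq]
    rw [← neg_div]
    ring_nf
  rw [show (atBot : Filter ℝ) = Filter.map Neg.neg atTop from (Filter.map_neg_atTop).symm]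
  rwa [Filter.tendsto_map'_iff]



lemma tendsto_arg (t₀ : ℝ) (ht₀ : 0 < t₀) (F : Filter ℝ) (L : ℝ)
    (hL : ∀ s : ℝ, Tendsto (fun t : ℝ => (-t + s) / Real.sqrt (t ^ 2 + 1)) F (𝓝 L))
    (s : ℝ) :
    Tendsto (fun p : ℝ × ℝ => (-p.1 + s) / (2 * Real.sqrt (p.2 * (p.1 ^ 2 + 1))))
      (F ×ˢ (𝓝 t₀ ⊓ Filter.principal (Set.Ioi 0)))
      (𝓝 (L / (2 * Real.sqrt t₀))) := by
  have h1 : Tendsto (fun p : ℝ × ℝ => (-p.1 + s) / Real.sqrt (p.1 ^ 2 + 1))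
      (F ×ˢ (𝓝 t₀ ⊓ Filter.principal (Set.Ioi 0))) (𝓝 L) := (hL s).comp tendsto_fst
  have hsnd : Tendsto (fun p : ℝ × ℝ => p.2)
      (F ×ˢ (𝓝 t₀ ⊓ Filter.principal (Set.Ioi 0))) (𝓝 t₀) :=
    tendsto_snd.mono_right inf_le_left
  have h2 : Tendsto (fun p : ℝ × ℝ => 2 * Real.sqrt p.2)
      (F ×ˢ (𝓝 t₀ ⊓ Filter.principal (Set.Ioi 0))) (𝓝 (2 * Real.sqrt t₀)) :=
    tendsto_const_nhds.mul ((Real.continuous_sqrt.tendsto t₀).comp hsnd)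
  have hne : 2 * Real.sqrt t₀ ≠ 0 := by
    have : 0 < Real.sqrt t₀ := Real.sqrt_pos.mpr ht₀
    positivity
  have h := h1.div h2 hne
  refine Tendsto.congr' ?_ h
  have hmem : ∀ᶠ p : ℝ × ℝ in F ×ˢ (𝓝 t₀ ⊓ Filter.principal (Set.Ioi 0)), 0 < p.2 := by
    apply Filter.Eventually.prod_inr
    exact eventually_inf_principal.mpr (Filter.Eventually.of_forall fun x hx => hx)
  filter_upwards [hmem] with p hp
  simp only [Pi.div_apply]
  rw [Real.sqrt_mul hp.le, div_div]
  congr 1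
  ring

lemma phiA_tendsto (n : ℕ) (a : ℝ → ℂ) (ha_meas : Measurable a) {C : ℝ}
    (hC : ∀ y, ‖a y‖ ≤ C) (t₀ : ℝ) (ht₀ : 0 < t₀) (F : Filter ℝ) [F.IsCountablyGenerated]
    (L : ℝ) (hL : ∀ s : ℝ, Tendsto (fun t : ℝ => (-t + s) / Real.sqrt (t ^ 2 + 1)) F (𝓝 L))
    (ha : ContinuousAt a (L / (2 * Real.sqrt t₀))) :
    Tendsto (fun p : ℝ × ℝ => phiA n a p.1 p.2)
      (F ×ˢ (𝓝 t₀ ⊓ Filter.principal (Set.Ioi 0)))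
      (𝓝 (a (L / (2 * Real.sqrt t₀)) • (1 : Matrix (Fin n) (Fin n) ℂ))) := by
  set c := L / (2 * Real.sqrt t₀) with hc
  apply tendsto_pi_nhds.mpr
  intro j
  apply tendsto_pi_nhds.mpr
  intro k
  have hint : ∫ s : ℝ, a c * ((hermiteFun ↑j s * hermiteFun ↑k s : ℝ) : ℂ)
      = (a c • (1 : Matrix (Fin n) (Fin n) ℂ)) j k := by
    have hofreal : (∫ s : ℝ, ((hermiteFun ↑j s * hermiteFun ↑k s : ℝ) : ℂ))
        = ((∫ s : ℝ, hermiteFun ↑j s * hermiteFun ↑k s : ℝ) : ℂ) := integral_ofReal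
    rw [integral_const_mul, hofreal, integral_hermiteFun_mul]
    by_cases hjk : j = k
    · simp [hjk, Matrix.one_apply]
    · have : (j : ℕ) ≠ (k : ℕ) := fun h => hjk (Fin.val_injective h)
      simp [Matrix.one_apply, hjk, this]
  simp only [phiA, HHT, Matrix.of_apply]
  rw [← hint]
  apply tendsto_integral_filter_of_dominated_convergence
    (bound := fun s => C * |hermiteFun ↑j s * hermiteFun ↑k s|)
  · apply Filter.Eventually.of_forall
    rintro ⟨t₁, t₂⟩
    exact ((ha_meas.comp ((measurable_id.const_add (-t₁)).div_const _)).mul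
      (Complex.measurable_ofReal.comp (continuous_hermiteFunProd j k).measurable)).aestronglyMeasurable
  · apply Filter.Eventually.of_forall
    rintro ⟨t₁, t₂⟩
    apply ae_of_all
    intro s
    rw [norm_mul, Complex.norm_real, Real.norm_eq_abs]
    exact mul_le_mul_of_nonneg_right (hC _) (abs_nonneg _)
  · exact ((integrable_hermiteFun_mul ↑j ↑k).abs).const_mul C
  · apply ae_of_all
    intro s
    exact (ha.tendsto.comp (tendsto_arg t₀ ht₀ F L hL s)).mul_const _


end PhiAAux

open PhiAAux in
/-- Let `t₀ ∈ (0,∞)` and `a ∈ L^∞(ℝ)`. If `a` is continuous at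
`−1/(2√t₀)` then `φ^a(t₁,t₂) → a(−1/(2√t₀))·I` as `(t₁,t₂) → (+∞,t₀)`; if `a` is
continuous at `1/(2√t₀)` then `φ^a(t₁,t₂) → a(1/(2√t₀))·I` as `(t₁,t₂) → (−∞,t₀)`. -/
theorem phiA_limit_lateral (n : ℕ) (hn : 1 ≤ n) (t₀ : ℝ) (ht₀ : 0 < t₀) (a : ℝ → ℂ)
    (ha_meas : Measurable a) (ha_bdd : ∃ C : ℝ, ∀ y : ℝ, ‖a y‖ ≤ C) :
    (ContinuousAt a (-(1 / (2 * Real.sqrt t₀))) →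
      ∀ ε > (0 : ℝ), ∃ δ > (0 : ℝ), ∃ N > (0 : ℝ), ∀ t₁ t₂ : ℝ,
        0 < t₂ → |t₂ - t₀| < δ → N < t₁ →
        ‖phiA n a t₁ t₂ -
            a (-(1 / (2 * Real.sqrt t₀))) • (1 : Matrix (Fin n) (Fin n) ℂ)‖ < ε) ∧
    (ContinuousAt a (1 / (2 * Real.sqrt t₀)) →
      ∀ ε > (0 : ℝ), ∃ δ > (0 : ℝ), ∃ N > (0 : ℝ), ∀ t₁ t₂ : ℝ,
        0 < t₂ → |t₂ - t₀| < δ → t₁ < -N →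
        ‖phiA n a t₁ t₂ -
            a (1 / (2 * Real.sqrt t₀)) • (1 : Matrix (Fin n) (Fin n) ℂ)‖ < ε) := by
  obtain ⟨C, hC⟩ := ha_bdd
  constructor
  · intro ha ε hε
    have heq : (-1 : ℝ) / (2 * Real.sqrt t₀) = -(1 / (2 * Real.sqrt t₀)) := by ring
    have ha' : ContinuousAt a ((-1 : ℝ) / (2 * Real.sqrt t₀)) := by rwa [heq]
    have htend := phiA_tendsto n a ha_meas hC t₀ ht₀ atTop (-1)
      tendsto_ratio_atTop ha'
    rw [heq] at htend
    have hev := (Metric.tendsto_nhds.mp htend) ε hε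
    rw [Filter.eventually_prod_iff] at hev
    obtain ⟨pa, hpa, pb, hpb, himp⟩ := hev
    rw [eventually_atTop] at hpa
    obtain ⟨N', hN'⟩ := hpa
    rw [eventually_inf_principal, Metric.eventually_nhds_iff] at hpb
    obtain ⟨δ, hδ, hδ'⟩ := hpb
    refine ⟨δ, hδ, max N' 1, lt_of_lt_of_le one_pos (le_max_right _ _), ?_⟩
    intro t₁ t₂ ht₂ hdist ht₁
    have h1 : pa t₁ := hN' t₁ (le_of_lt (lt_of_le_of_lt (le_max_left N' 1) ht₁))
    have h2 : pb t₂ := hδ' (show dist t₂ t₀ < δ by rwa [Real.dist_eq]) ht₂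
    have hfin := himp h1 h2
    rwa [dist_eq_norm] at hfin
  · intro ha ε hε
    have htend := phiA_tendsto n a ha_meas hC t₀ ht₀ atBot 1
      tendsto_ratio_atBot ha
    have hev := (Metric.tendsto_nhds.mp htend) ε hε
    rw [Filter.eventually_prod_iff] at hev
    obtain ⟨pa, hpa, pb, hpb, himp⟩ := hev
    rw [eventually_atBot] at hpa
    obtain ⟨N', hN'⟩ := hpa
    rw [eventually_inf_principal, Metric.eventually_nhds_iff] at hpb
    obtain ⟨δ, hδ, hδ'⟩ := hpb
    refine ⟨δ, hδ, max (-N') 1, lt_of_lt_of_le one_pos (le_max_right _ _), ?_⟩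
    intro t₁ t₂ ht₂ hdist ht₁
    have hle : -(max (-N') 1) ≤ N' := by
      have := le_max_left (-N') 1
      linarith
    have h1 : pa t₁ := hN' t₁ (le_of_lt (lt_of_lt_of_le ht₁ hle))
    have h2 : pb t₂ := hδ' (show dist t₂ t₀ < δ by rwa [Real.dist_eq]) ht₂
    have hfin := himp h1 h2
    rwa [dist_eq_norm] at hfin
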